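/- Let Q be the Steiner quadruple system of the extended Hamming code of length n ≥ 16. The code C⁰ of 6-subsets of {1,…,n} containing no block of Q is a completely regular code in the Johnson graph J(n,6) with covering radius 2 and intersection array {60, 6; 4(n−15), 6(n−8)}. -/

import Mathlib

open Finset

open Classical in
noncomputable def Kf {n : ℕ} (Q : Set (Finset (Fin n))) (z : Finset (Fin n)) :
    Finset (Finset (Fin n)) :=
  z.powerset.filter (· ∈ Q)

lemma mem_Kf {n : ℕ} {Q : Set (Finset (Fin n))} {z B : Finset (Fin n)} :
    B ∈ Kf Q z ↔ B ⊆ z ∧ B ∈ Q := by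
  classical
  simp [Kf, Finset.mem_filter, Finset.mem_powerset]

structure Good {n : ℕ} (Q : Set (Finset (Fin n))) (blk : Finset (Fin n) → Finset (Fin n))
    (pt : Finset (Fin n) → Fin n) : Prop where
  card4 : ∀ B ∈ Q, B.card = 4
  blk_mem : ∀ s : Finset (Fin n), s.card = 3 → blk s ∈ Q
  blk_sub : ∀ s : Finset (Fin n), s.card = 3 → s ⊆ blk s
  blk_uniq : ∀ s : Finset (Fin n), s.card = 3 → ∀ B ∈ Q, s ⊆ B → B = blk s
  pt_not : ∀ s : Finset (Fin n), s.card = 3 → pt s ∉ s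
  blk_eq : ∀ s : Finset (Fin n), s.card = 3 → blk s = insert (pt s) s
  sdiff_mem : ∀ B ∈ Q, ∀ B' ∈ Q, B ≠ B' → (B ∩ B').card = 2 →
    (B ∪ B') \ (B ∩ B') ∈ Q

variable {n : ℕ} {Q : Set (Finset (Fin n))} {blk : Finset (Fin n) → Finset (Fin n)}
  {pt : Finset (Fin n) → Fin n}

namespace Good

variable (G : Good Q blk pt)

include G

/-- uniqueness: two blocks sharing 3 points are equal -/
lemma eq_of_three {B B' s : Finset (Fin n)} (hB : B ∈ Q) (hB' : B' ∈ Q)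
    (hs : s.card = 3) (h1 : s ⊆ B) (h2 : s ⊆ B') : B = B' := by
  rw [G.blk_uniq s hs B hB h1, G.blk_uniq s hs B' hB' h2]

lemma inter_card_le {B B' : Finset (Fin n)} (hB : B ∈ Q) (hB' : B' ∈ Q)
    (hne : B ≠ B') : (B ∩ B').card ≤ 2 := by
  by_contra h
  push_neg at h
  obtain ⟨s, hs, hsc⟩ := Finset.exists_subset_card_eq h
  exact hne (G.eq_of_three hB hB' hsc (hs.trans inter_subset_left)
    (hs.trans inter_subset_right))

lemma inter2 {z B B' : Finset (Fin n)} (hz : z.card = 6)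
    (hB : B ∈ Kf Q z) (hB' : B' ∈ Kf Q z) (hne : B ≠ B') :
    (B ∩ B').card = 2 := by
  rw [mem_Kf] at hB hB'
  have h1 : (B ∪ B').card + (B ∩ B').card = 8 := by
    rw [Finset.card_union_add_card_inter, G.card4 B hB.2, G.card4 B' hB'.2]
  have h2 : (B ∪ B').card ≤ 6 := hz ▸ Finset.card_le_card (union_subset hB.1 hB'.1)
  have h3 := G.inter_card_le hB.2 hB'.2 hne
  omega

lemma union_eq {z B B' : Finset (Fin n)} (hz : z.card = 6)
    (hB : B ∈ Kf Q z) (hB' : B' ∈ Kf Q z) (hne : B ≠ B') :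
    B ∪ B' = z := by
  have h2 := G.inter2 hz hB hB' hne
  have h1 : (B ∪ B').card + (B ∩ B').card = 8 := by
    rw [mem_Kf] at hB hB'
    rw [Finset.card_union_add_card_inter, G.card4 B hB.2, G.card4 B' hB'.2]
  rw [mem_Kf] at hB hB'
  exact Finset.eq_of_subset_of_card_le (union_subset hB.1 hB'.1) (by omega)

lemma third {z B B' : Finset (Fin n)} (hz : z.card = 6)
    (hB : B ∈ Kf Q z) (hB' : B' ∈ Kf Q z) (hne : B ≠ B') :
    z \ (B ∩ B') ∈ Kf Q z := by
  have hu := G.union_eq hz hB hB' hne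
  have h2 := G.inter2 hz hB hB' hne
  rw [mem_Kf] at hB hB' ⊢
  refine ⟨sdiff_subset, ?_⟩
  have := G.sdiff_mem B hB.2 B' hB'.2 hne h2
  rwa [hu] at this

lemma avoid_unique {z B B' : Finset (Fin n)} {w : Fin n} (hz : z.card = 6)
    (hB : B ∈ Kf Q z) (hB' : B' ∈ Kf Q z) (hw : w ∈ z) (h1 : w ∉ B) (h2 : w ∉ B') :
    B = B' := by
  by_contra hne
  have := G.union_eq hz hB hB' hne
  rw [← this] at hw
  simp at hw
  tauto

lemma pair_card {z B : Finset (Fin n)} (hz : z.card = 6) (hB : B ∈ Kf Q z) :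
    (z \ B).card = 2 := by
  rw [mem_Kf] at hB
  rw [Finset.card_sdiff_of_subset hB.1, hz, G.card4 B hB.2]

lemma pair_disjoint {z B B' : Finset (Fin n)} (hz : z.card = 6)
    (hB : B ∈ Kf Q z) (hB' : B' ∈ Kf Q z) (hne : B ≠ B') :
    Disjoint (z \ B) (z \ B') := by
  have h := G.union_eq hz hB hB' hne
  rw [Finset.disjoint_iff_inter_eq_empty]
  ext w; simp [← h]; tauto

omit G in
lemma sdiff_injOn {z : Finset (Fin n)} :
    Set.InjOn (fun B => z \ B) (Kf Q z) := by
  intro B hB B' hB' h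
  have h1 := (mem_Kf.1 hB).1
  have h2 := (mem_Kf.1 hB').1
  have := congrArg (z \ ·) h
  simpa [Finset.sdiff_sdiff_eq_self h1, Finset.sdiff_sdiff_eq_self h2] using this

lemma biUnion_card {z : Finset (Fin n)} (hz : z.card = 6) :
    ((Kf Q z).biUnion (fun B => z \ B)).card = 2 * (Kf Q z).card := by
  rw [Finset.card_biUnion (fun B hB B' hB' hne => G.pair_disjoint hz hB hB' hne)]
  rw [Finset.sum_congr rfl (fun B hB => G.pair_card hz hB), Finset.sum_const, smul_eq_mul,
    mul_comm]

lemma card_le3 {z : Finset (Fin n)} (hz : z.card = 6) : (Kf Q z).card ≤ 3 := by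
  have h1 := G.biUnion_card hz
  have h2 : ((Kf Q z).biUnion (fun B => z \ B)).card ≤ 6 := by
    rw [← hz]
    exact Finset.card_le_card (Finset.biUnion_subset.2 (fun B _ => sdiff_subset))
  omega

lemma card_ne2 {z : Finset (Fin n)} (hz : z.card = 6) : (Kf Q z).card ≠ 2 := by
  intro h2
  obtain ⟨B, B', hne, hK⟩ := Finset.card_eq_two.1 h2
  have hB : B ∈ Kf Q z := by rw [hK]; simp
  have hB' : B' ∈ Kf Q z := by rw [hK]; simp
  have hD := G.third hz hB hB' hne
  have hi2 := G.inter2 hz hB hB' hne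
  obtain ⟨w, hw⟩ : (B ∩ B').Nonempty := by
    rw [← Finset.card_pos, hi2]; norm_num
  have hwD : w ∉ z \ (B ∩ B') := by simp [hw]
  rw [hK] at hD
  simp only [Finset.mem_insert, Finset.mem_singleton] at hD
  rcases hD with hD | hD <;> rw [hD] at hwD <;>
    simp [Finset.mem_inter.1 hw] at hwD

lemma card013 {z : Finset (Fin n)} (hz : z.card = 6) :
    (Kf Q z).card = 0 ∨ (Kf Q z).card = 1 ∨ (Kf Q z).card = 3 := by
  have := G.card_le3 hz
  have := G.card_ne2 hz
  omega

lemma two_blocks_card3 {z B B' : Finset (Fin n)} (hz : z.card = 6)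
    (hB : B ∈ Kf Q z) (hB' : B' ∈ Kf Q z) (hne : B ≠ B') : (Kf Q z).card = 3 := by
  have h1 : 1 < (Kf Q z).card := Finset.one_lt_card.2 ⟨B, hB, B', hB', hne⟩
  have := G.card013 hz
  have := G.card_ne2 hz
  omega

lemma exists_avoid {z : Finset (Fin n)} {w : Fin n} (hz : z.card = 6)
    (h3 : (Kf Q z).card = 3) (hw : w ∈ z) : ∃ B ∈ Kf Q z, w ∉ B := by
  have h1 := G.biUnion_card hz
  rw [h3] at h1
  have h2 : (Kf Q z).biUnion (fun B => z \ B) = z := by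
    apply Finset.eq_of_subset_of_card_le
      (Finset.biUnion_subset.2 (fun B _ => sdiff_subset))
    omega
  rw [← h2] at hw
  obtain ⟨B, hB, hwB⟩ := Finset.mem_biUnion.1 hw
  exact ⟨B, hB, (Finset.mem_sdiff.1 hwB).2⟩

end Good

namespace Good
variable {n : ℕ} {Q : Set (Finset (Fin n))} {blk : Finset (Fin n) → Finset (Fin n)}
  {pt : Finset (Fin n) → Fin n} (G : Good Q blk pt)
include G

lemma blk_card (s : Finset (Fin n)) (hs : s.card = 3) : (blk s).card = 4 :=
  G.card4 _ (G.blk_mem s hs)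

lemma pt_eq {s : Finset (Fin n)} {b : Fin n} (hs : s.card = 3) (hb : b ∉ s)
    (h : blk s = insert b s) : pt s = b := by
  have h2 := G.blk_eq s hs
  have : pt s ∈ insert b s := by rw [← h, h2]; exact Finset.mem_insert_self _ _
  rcases Finset.mem_insert.1 this with h3 | h3
  · exact h3
  · exact absurd h3 (G.pt_not s hs)

end Good

section Nbr

variable {n : ℕ} {x z : Finset (Fin n)} {a b : Fin n}

lemma nbr_facts (hx : x.card = 6) (ha : a ∈ x) (hb : b ∉ x) :
    (insert b (x.erase a)).card = 6 ∧ x ∩ insert b (x.erase a) = x.erase a ∧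
    (x ∩ insert b (x.erase a)).card = 5 ∧ x \ insert b (x.erase a) = {a} ∧
    insert b (x.erase a) \ x = {b} ∧ (insert b (x.erase a)).erase b = x.erase a := by
  have hbe : b ∉ x.erase a := fun h => hb (Finset.mem_of_mem_erase h)
  have hc5 : (x.erase a).card = 5 := by rw [Finset.card_erase_of_mem ha, hx]
  have hie : x ∩ insert b (x.erase a) = x.erase a := by
    ext w
    simp only [Finset.mem_inter, Finset.mem_insert, Finset.mem_erase]
    constructor
    · rintro ⟨hw, h | h⟩
      · exact absurd (h ▸ hw) hb
      · exact h
    · exact fun h => ⟨h.2, Or.inr h⟩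
  refine ⟨?_, hie, ?_, ?_, ?_, Finset.erase_insert hbe⟩
  · rw [Finset.card_insert_of_notMem hbe, hc5]
  · rw [hie, hc5]
  · ext w
    simp only [Finset.mem_sdiff, Finset.mem_insert, Finset.mem_erase,
      Finset.mem_singleton]
    constructor
    · rintro ⟨hw, h⟩
      push_neg at h
      by_contra hwa
      exact (h.2 hwa hw).elim
    · rintro rfl
      push_neg
      exact ⟨ha, fun h => absurd (h ▸ ha) hb, fun h => (h rfl).elim⟩
  · ext w
    simp only [Finset.mem_sdiff, Finset.mem_insert, Finset.mem_erase,
      Finset.mem_singleton]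
    constructor
    · rintro ⟨h | h, hw⟩
      · exact h
      · exact absurd h.2 hw
    · rintro rfl
      exact ⟨Or.inl rfl, hb⟩

lemma nbr_param (hx : x.card = 6) (hz : z.card = 6) (h5 : (x ∩ z).card = 5) :
    ∃ a b, a ∈ x ∧ b ∉ x ∧ a ∉ z ∧ b ∈ z ∧ z = insert b (x.erase a) := by
  have h1 : (x \ z).card = 1 := by
    have := Finset.card_inter_add_card_sdiff x z
    omega
  have h2 : (z \ x).card = 1 := by
    have := Finset.card_inter_add_card_sdiff z x
    rw [Finset.inter_comm] at h5
    omega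
  obtain ⟨a, hae⟩ := Finset.card_eq_one.1 h1
  obtain ⟨b, hbe⟩ := Finset.card_eq_one.1 h2
  have haz : a ∈ x \ z := hae ▸ Finset.mem_singleton_self a
  have hbz : b ∈ z \ x := hbe ▸ Finset.mem_singleton_self b
  rw [Finset.mem_sdiff] at haz hbz
  refine ⟨a, b, haz.1, hbz.2, haz.2, hbz.1, ?_⟩
  have hxe : x.erase a = x ∩ z := by
    rw [Finset.erase_eq, ← hae, Finset.sdiff_sdiff_self_left]
  rw [hxe, Finset.insert_eq, ← hbe, Finset.inter_comm, Finset.sdiff_union_inter]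

end Nbr

namespace Good

variable {n : ℕ} {Q : Set (Finset (Fin n))} {blk : Finset (Fin n) → Finset (Fin n)}
  {pt : Finset (Fin n) → Fin n} (G : Good Q blk pt)

include G

lemma nbr_block {x D : Finset (Fin n)} {a b : Fin n} (hx : x.card = 6) (ha : a ∈ x)
    (hb : b ∉ x) (hD : D ∈ Kf Q (insert b (x.erase a))) :
    (b ∉ D ∧ D ⊆ x.erase a) ∨
    (b ∈ D ∧ D.erase b ⊆ x.erase a ∧ (D.erase b).card = 3 ∧
      blk (D.erase b) = D ∧ pt (D.erase b) = b) := by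
  rw [mem_Kf] at hD
  have h4 := G.card4 D hD.2
  have hsub : D.erase b ⊆ x.erase a := Finset.subset_insert_iff.1 hD.1
  by_cases hbD : b ∈ D
  · right
    have ht3 : (D.erase b).card = 3 := by rw [Finset.card_erase_of_mem hbD, h4]
    have hblk : blk (D.erase b) = D :=
      (G.blk_uniq _ ht3 D hD.2 (Finset.erase_subset _ _)).symm
    refine ⟨hbD, hsub, ht3, hblk, ?_⟩
    apply G.pt_eq ht3 (Finset.notMem_erase _ _)
    rw [hblk, Finset.insert_erase hbD]
  · left
    rw [Finset.erase_eq_of_notMem hbD] at hsub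
    exact ⟨hbD, hsub⟩

lemma part1 {x z : Finset (Fin n)} (hx : x.card = 6) (h0 : Kf Q x = ∅)
    (hz : z.card = 6) (h3 : (Kf Q z).card = 3) : (x ∩ z).card ≠ 5 := by
  intro h5
  obtain ⟨a, b, ha, hb, haz, hbz, hze⟩ := nbr_param hx hz h5
  obtain ⟨B, hB, hbB⟩ := G.exists_avoid hz h3 hbz
  rcases G.nbr_block hx ha hb (hze ▸ hB) with ⟨_, hsub⟩ | ⟨hbB', _⟩
  · have : B ∈ Kf Q x :=
      mem_Kf.2 ⟨hsub.trans (Finset.erase_subset _ _), (mem_Kf.1 hB).2⟩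
    rw [h0] at this
    exact absurd this (Finset.notMem_empty _)
  · exact hbB hbB'

end Good

namespace Good

variable {n : ℕ} {Q : Set (Finset (Fin n))} {blk : Finset (Fin n) → Finset (Fin n)}
  {pt : Finset (Fin n) → Fin n}

/-- `insert c B = x.erase a` when `x\B = {a,c}`. -/
lemma cB_eq {x B : Finset (Fin n)} {a c : Fin n}
    (hx : x.card = 6) (hB4 : B.card = 4) (hBx : B ⊆ x) (ha : a ∈ x) (hc : c ∈ x)
    (haB : a ∉ B) (hcB : c ∉ B) (hac : a ≠ c) : insert c B = x.erase a := by
  apply Finset.eq_of_subset_of_card_le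
  · refine Finset.insert_subset (Finset.mem_erase.2 ⟨Ne.symm hac, hc⟩) ?_
    exact (Finset.subset_erase).2 ⟨hBx, haB⟩
  · rw [Finset.card_erase_of_mem ha, hx, Finset.card_insert_of_notMem hcB, hB4]

variable (G : Good Q blk pt)
include G

lemma M_mem {x B q : Finset (Fin n)} {a c : Fin n}
    (hx : x.card = 6) (hBQ : B ∈ Q) (hBx : B ⊆ x) (ha : a ∈ x) (hc : c ∈ x)
    (haB : a ∉ B) (hcB : c ∉ B) (hac : a ≠ c)
    (hq : q ∈ Finset.powersetCard 2 B) (hbx : pt (insert c q) ∉ x) :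
    B ∈ Kf Q (insert (pt (insert c q)) (x.erase a)) ∧
    blk (insert c q) ∈ Kf Q (insert (pt (insert c q)) (x.erase a)) ∧
    blk (insert c q) ≠ B ∧
    (insert (pt (insert c q)) (x.erase a)).card = 6 ∧
    (x ∩ insert (pt (insert c q)) (x.erase a)).card = 5 ∧
    x \ insert (pt (insert c q)) (x.erase a) = {a} ∧
    (Kf Q (insert (pt (insert c q)) (x.erase a))).card = 3 := by
  obtain ⟨hqB, hq2⟩ := Finset.mem_powersetCard.1 hq
  have hB4 := G.card4 B hBQ
  have hcq : c ∉ q := fun h => hcB (hqB h)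
  have ht3 : (insert c q).card = 3 := by
    rw [Finset.card_insert_of_notMem hcq, hq2]
  set b := pt (insert c q) with hbdef
  set t := insert c q with htdef
  have hcBe := cB_eq hx hB4 hBx ha hc haB hcB hac
  have htx : t ⊆ x.erase a := by
    rw [← hcBe]
    exact Finset.insert_subset_insert c hqB
  obtain ⟨hz6, hix, hi5, hxz, hzx, hez⟩ := nbr_facts hx ha hbx
  have hBz : B ∈ Kf Q (insert b (x.erase a)) := by
    refine mem_Kf.2 ⟨?_, hBQ⟩
    refine Finset.Subset.trans ?_ (Finset.subset_insert _ _)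
    rw [← hcBe]; exact Finset.subset_insert _ _
  have hDz : blk t ∈ Kf Q (insert b (x.erase a)) := by
    refine mem_Kf.2 ⟨?_, G.blk_mem t ht3⟩
    rw [G.blk_eq t ht3, ← hbdef]
    exact Finset.insert_subset_insert b htx
  have hDB : blk t ≠ B := by
    intro h
    have : b ∈ blk t := by
      rw [G.blk_eq t ht3]; exact Finset.mem_insert_self _ _
    rw [h] at this
    exact hbx (hBx this)
  exact ⟨hBz, hDz, hDB, hz6, hi5, hxz, G.two_blocks_card3 hz6 hDz hBz hDB⟩

lemma M_surj {x B z : Finset (Fin n)} {a c : Fin n}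
    (hx : x.card = 6) (hBQ : B ∈ Q) (hBx : B ⊆ x) (ha : a ∈ x) (hc : c ∈ x)
    (haB : a ∉ B) (hcB : c ∉ B) (hac : a ≠ c)
    (hz6 : z.card = 6) (hk3 : (Kf Q z).card = 3) (hi5 : (x ∩ z).card = 5)
    (hxz : x \ z = {a}) :
    ∃ q ∈ Finset.powersetCard 2 B, pt (insert c q) ∉ x ∧
      insert (pt (insert c q)) (x.erase a) = z := by
  have hB4 := G.card4 B hBQ
  have hcBe := cB_eq hx hB4 hBx ha hc haB hcB hac
  obtain ⟨a', b, ha', hb, ha'z, hbz, hze⟩ := nbr_param hx hz6 hi5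
  have haa : a' = a := by
    have : a' ∈ x \ z := Finset.mem_sdiff.2 ⟨ha', ha'z⟩
    rwa [hxz, Finset.mem_singleton] at this
  subst haa
  -- B is a block of z
  have hBz : B ∈ Kf Q z := by
    refine mem_Kf.2 ⟨?_, hBQ⟩
    rw [hze]
    refine Finset.Subset.trans ?_ (Finset.subset_insert _ _)
    rw [← hcBe]; exact Finset.subset_insert _ _
  -- get another block
  obtain ⟨D, hD, hDB⟩ := Finset.exists_mem_ne (s := Kf Q z) (by omega) B
  -- b ∈ D
  have hbD : b ∈ D := by
    by_contra hbD
    rcases G.nbr_block hx ha hb (hze ▸ hD) with ⟨_, hsub⟩ | ⟨h, _⟩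
    · refine hDB (G.avoid_unique hx (mem_Kf.2 ⟨hsub.trans (Finset.erase_subset _ _),
        (mem_Kf.1 hD).2⟩) (mem_Kf.2 ⟨hBx, hBQ⟩) ha ?_ haB)
      exact fun h => (Finset.mem_erase.1 (hsub h)).1 rfl
    · exact hbD h
  have hDQ := (mem_Kf.1 hD).2
  have hD4 := G.card4 D hDQ
  -- c ∈ D
  have hcD : c ∈ D := by
    by_contra hcD
    have hsub : D.erase b ⊆ B := by
      intro w hw
      have hwD := Finset.mem_of_mem_erase hw
      have hwb : w ≠ b := (Finset.mem_erase.1 hw).1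
      have : w ∈ z := (mem_Kf.1 hD).1 hwD
      rw [hze] at this
      rcases Finset.mem_insert.1 this with h | h
      · exact absurd h hwb
      · rw [← hcBe] at h
        rcases Finset.mem_insert.1 h with h | h
        · exact absurd (h ▸ hwD) hcD
        · exact h
    have h3 : (D.erase b).card = 3 := by rw [Finset.card_erase_of_mem hbD, hD4]
    exact hDB (G.eq_of_three hDQ hBQ h3 (Finset.erase_subset _ _) hsub)
  -- q := D ∩ B
  refine ⟨D ∩ B, ?_, ?_, ?_⟩
  · exact Finset.mem_powersetCard.2 ⟨Finset.inter_subset_right,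
      G.inter2 hz6 hD hBz hDB⟩
  on_goal 2 => skip
  all_goals {
    have hq2 : (D ∩ B).card = 2 := G.inter2 hz6 hD hBz hDB
    have hcq : c ∉ D ∩ B := fun h => hcB (Finset.mem_inter.1 h).2
    have ht3 : (insert c (D ∩ B)).card = 3 := by
      rw [Finset.card_insert_of_notMem hcq, hq2]
    have htD : insert c (D ∩ B) ⊆ D :=
      Finset.insert_subset hcD Finset.inter_subset_left
    have hblk : blk (insert c (D ∩ B)) = D := (G.blk_uniq _ ht3 D hDQ htD).symm
    have hDe : D = insert b (insert c (D ∩ B)) := by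
      apply Finset.eq_of_subset_of_card_le
      · intro w hw
        have hwz : w ∈ z := (mem_Kf.1 hD).1 hw
        rw [hze] at hwz
        rcases Finset.mem_insert.1 hwz with h | h
        · exact h ▸ Finset.mem_insert_self _ _
        · rw [← hcBe] at h
          rcases Finset.mem_insert.1 h with h | h
          · exact h ▸ Finset.mem_insert.2 (Or.inr (Finset.mem_insert_self _ _))
          · exact Finset.mem_insert.2 (Or.inr (Finset.mem_insert.2
              (Or.inr (Finset.mem_inter.2 ⟨hw, h⟩))))
      · have hbt : b ∉ insert c (D ∩ B) := by
          intro h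
          rcases Finset.mem_insert.1 h with h | h
          · exact hb (h ▸ hc)
          · exact hb (hBx (Finset.mem_inter.1 h).2)
        rw [Finset.card_insert_of_notMem hbt, ht3, hD4]
    have hpt : pt (insert c (D ∩ B)) = b := by
      apply G.pt_eq ht3
      · intro h
        rcases Finset.mem_insert.1 h with h | h
        · exact hb (h ▸ hc)
        · exact hb (hBx (Finset.mem_inter.1 h).2)
      · rw [hblk, ← hDe]
    first
      | (rw [hpt]; exact hb)
      | (rw [hpt, ← hze])
  }

end Good

namespace Good

variable {n : ℕ} {Q : Set (Finset (Fin n))} {blk : Finset (Fin n) → Finset (Fin n)}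
  {pt : Finset (Fin n) → Fin n} (G : Good Q blk pt)
include G

lemma M_inter {x B q : Finset (Fin n)} {c : Fin n}
    (hBQ : B ∈ Q) (hBx : B ⊆ x) (hcB : c ∉ B) (hbx : pt (insert c q) ∉ x)
    (hqB : q ⊆ B) (hq2 : q.card = 2) :
    blk (insert c q) ∩ B = q := by
  have hcq : c ∉ q := fun h => hcB (hqB h)
  have ht3 : (insert c q).card = 3 := by rw [Finset.card_insert_of_notMem hcq, hq2]
  have hD := G.blk_eq _ ht3
  ext w
  simp only [Finset.mem_inter]
  constructor
  · rintro ⟨hwD, hwB⟩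
    rw [hD] at hwD
    rcases Finset.mem_insert.1 hwD with h | h
    · exact absurd (h ▸ hwB) (fun hh => hbx (h ▸ hBx hh))
    · rcases Finset.mem_insert.1 h with h | h
      · exact absurd (h ▸ hwB) hcB
      · exact h
  · intro hw
    exact ⟨G.blk_sub _ ht3 (Finset.mem_insert.2 (Or.inr hw)), hqB hw⟩

lemma M_fiber {x B q : Finset (Fin n)} {a c : Fin n}
    (hx : x.card = 6) (hBQ : B ∈ Q) (hBx : B ⊆ x) (ha : a ∈ x) (hc : c ∈ x)
    (haB : a ∉ B) (hcB : c ∉ B) (hac : a ≠ c)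
    (hq : q ∈ Finset.powersetCard 2 B) (hbx : pt (insert c q) ∉ x) :
    (B \ q ∈ Finset.powersetCard 2 B ∧ pt (insert c (B \ q)) = pt (insert c q)) ∧
    (∀ q' ∈ Finset.powersetCard 2 B, pt (insert c q') ∉ x →
      insert (pt (insert c q')) (x.erase a) = insert (pt (insert c q)) (x.erase a) →
      q' = q ∨ q' = B \ q) := by
  obtain ⟨hqB, hq2⟩ := Finset.mem_powersetCard.1 hq
  have hB4 := G.card4 B hBQ
  have hcBe := cB_eq hx hB4 hBx ha hc haB hcB hac
  have hcq : c ∉ q := fun h => hcB (hqB h)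
  have ht3 : (insert c q).card = 3 := by rw [Finset.card_insert_of_notMem hcq, hq2]
  set b := pt (insert c q) with hbdef
  obtain ⟨hBz, hDz, hDB, hz6, hi5, hxz, hk3⟩ :=
    G.M_mem hx hBQ hBx ha hc haB hcB hac hq hbx
  have hzdef : (insert b (x.erase a)) = insert b (insert c B) := by rw [hcBe]
  have hbB : b ∉ B := fun h => hbx (hBx h)
  have hbq : b ∉ q := fun h => hbB (hqB h)
  have hbc : b ≠ c := fun h => hbx (h ▸ hc)
  have hDeq : blk (insert c q) = insert b (insert c q) := G.blk_eq _ ht3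
  have hqDB : blk (insert c q) ∩ B = q := G.M_inter hBQ hBx hcB hbx hqB hq2
  have hE := G.third hz6 hDz hBz hDB
  have hEeq : insert b (x.erase a) \ (blk (insert c q) ∩ B)
      = insert b (insert c (B \ q)) := by
    rw [hqDB, hzdef]
    ext w
    simp only [Finset.mem_sdiff, Finset.mem_insert]
    constructor
    · rintro ⟨h | h | h, hwq⟩
      · exact Or.inl h
      · exact Or.inr (Or.inl h)
      · exact Or.inr (Or.inr ⟨h, hwq⟩)
    · rintro (h | h | h)
      · exact ⟨Or.inl h, h ▸ hbq⟩
      · exact ⟨Or.inr (Or.inl h), h ▸ hcq⟩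
      · exact ⟨Or.inr (Or.inr h.1), h.2⟩
  have hBq2 : (B \ q).card = 2 := by rw [Finset.card_sdiff_of_subset hqB, hB4, hq2]
  have hcBq : c ∉ B \ q := fun h => hcB (Finset.mem_sdiff.1 h).1
  have ht'3 : (insert c (B \ q)).card = 3 := by
    rw [Finset.card_insert_of_notMem hcBq, hBq2]
  have hbt' : b ∉ insert c (B \ q) := by
    intro h
    rcases Finset.mem_insert.1 h with h | h
    · exact hbc h
    · exact hbB (Finset.mem_sdiff.1 h).1
  have hblk' : blk (insert c (B \ q)) = insert b (insert c (B \ q)) := by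
    have hEQ := (mem_Kf.1 hE).2
    have hsub : insert c (B \ q) ⊆ insert b (x.erase a) \ (blk (insert c q) ∩ B) := by
      rw [hEeq]; exact Finset.subset_insert _ _
    rw [← G.blk_uniq _ ht'3 _ hEQ hsub]
    exact hEeq
  have hpt' : pt (insert c (B \ q)) = b := G.pt_eq ht'3 hbt' hblk'
  refine ⟨⟨Finset.mem_powersetCard.2 ⟨Finset.sdiff_subset, hBq2⟩, hpt'⟩, ?_⟩
  intro q' hq' hb'x heq
  obtain ⟨hq'B, hq'2⟩ := Finset.mem_powersetCard.1 hq'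
  set b' := pt (insert c q') with hb'def
  have hbb' : b' = b := by
    have : b' ∈ insert b (x.erase a) := heq ▸ Finset.mem_insert_self _ _
    rcases Finset.mem_insert.1 this with h | h
    · exact h
    · exact absurd (Finset.mem_of_mem_erase h) hb'x
  have hcq' : c ∉ q' := fun h => hcB (hq'B h)
  have ht''3 : (insert c q').card = 3 := by rw [Finset.card_insert_of_notMem hcq', hq'2]
  have hD'eq : blk (insert c q') = insert b (insert c q') := hbb' ▸ G.blk_eq _ ht''3
  by_cases hDD : blk (insert c q') = blk (insert c q)
  · left
    have h1 : blk (insert c q') ∩ B = q' := G.M_inter hBQ hBx hcB hb'x hq'B hq'2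
    rw [hDD, hqDB] at h1
    exact h1.symm
  · right
    -- both blocks in Kf z, intersect in exactly {b, c}
    obtain ⟨_, hD'z, _, _, _, _, _⟩ :=
      G.M_mem hx hBQ hBx ha hc haB hcB hac hq' hb'x
    rw [← hb'def, hbb'] at hD'z
    have hi2 := G.inter2 hz6 hD'z hDz hDD
    have hbcsub : ({b, c} : Finset (Fin n)) ⊆ blk (insert c q') ∩ blk (insert c q) := by
      intro w hw
      rcases Finset.mem_insert.1 hw with h | h
      · subst h
        exact Finset.mem_inter.2 ⟨hD'eq ▸ Finset.mem_insert_self _ _,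
          hDeq ▸ Finset.mem_insert_self _ _⟩
      · rw [Finset.mem_singleton] at h
        subst h
        exact Finset.mem_inter.2
          ⟨hD'eq ▸ Finset.mem_insert.2 (Or.inr (Finset.mem_insert_self _ _)),
           hDeq ▸ Finset.mem_insert.2 (Or.inr (Finset.mem_insert_self _ _))⟩
    have hbceq : ({b, c} : Finset (Fin n)) = blk (insert c q') ∩ blk (insert c q) := by
      apply Finset.eq_of_subset_of_card_le hbcsub
      rw [hi2, Finset.card_pair hbc]
    have hdisj : ∀ w, w ∈ q' → w ∉ q := by
      intro w hw hwq
      have : w ∈ blk (insert c q') ∩ blk (insert c q) := by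
        refine Finset.mem_inter.2 ⟨?_, ?_⟩
        · exact hD'eq ▸ Finset.mem_insert.2 (Or.inr (Finset.mem_insert.2 (Or.inr hw)))
        · exact hDeq ▸ Finset.mem_insert.2 (Or.inr (Finset.mem_insert.2 (Or.inr hwq)))
      rw [← hbceq] at this
      rcases Finset.mem_insert.1 this with h | h
      · exact hbB (h ▸ hq'B hw)
      · rw [Finset.mem_singleton] at h
        exact hcq (h ▸ hwq)
    have hsub : q' ⊆ B \ q :=
      fun w hw => Finset.mem_sdiff.2 ⟨hq'B hw, hdisj w hw⟩
    exact Finset.eq_of_subset_of_card_le hsub (by rw [hBq2, hq'2])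

open Classical in
lemma lemmaM {x B : Finset (Fin n)} {a c : Fin n}
    (hx : x.card = 6) (hBQ : B ∈ Q) (hBx : B ⊆ x) (ha : a ∈ x) (hc : c ∈ x)
    (haB : a ∉ B) (hcB : c ∉ B) (hac : a ≠ c) :
    2 * ((Finset.univ.filter (fun z : Finset (Fin n) => z.card = 6 ∧
        (Kf Q z).card = 3 ∧ (x ∩ z).card = 5 ∧ x \ z = {a})).card)
      = ((Finset.powersetCard 2 B).filter
          (fun q => pt (insert c q) ∉ x)).card := by
  classical
  set Q2 := (Finset.powersetCard 2 B).filter (fun q => pt (insert c q) ∉ x) with hQ2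
  set φ : Finset (Fin n) → Finset (Fin n) :=
    fun q => insert (pt (insert c q)) (x.erase a) with hφ
  have hZa : (Finset.univ.filter (fun z : Finset (Fin n) => z.card = 6 ∧
      (Kf Q z).card = 3 ∧ (x ∩ z).card = 5 ∧ x \ z = {a})) = Q2.image φ := by
    ext z
    simp only [Finset.mem_filter, Finset.mem_univ, true_and, Finset.mem_image, hQ2]
    constructor
    · rintro ⟨h1, h2, h3, h4⟩
      obtain ⟨q, hqm, hqx, hqe⟩ := G.M_surj hx hBQ hBx ha hc haB hcB hac h1 h2 h3 h4
      exact ⟨q, ⟨hqm, hqx⟩, hqe⟩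
    · rintro ⟨q, hqm, rfl⟩
      obtain ⟨hqm', hqx⟩ := hqm
      obtain ⟨_, _, _, h1, h2, h3, h4⟩ :=
        G.M_mem hx hBQ hBx ha hc haB hcB hac hqm' hqx
      exact ⟨h1, h4, h2, h3⟩
  rw [hZa]
  have hsum := Finset.card_eq_sum_card_image φ Q2
  have hfib : ∀ z ∈ Q2.image φ, (Q2.filter (fun q => φ q = z)).card = 2 := by
    intro z hz
    obtain ⟨q, hq, rfl⟩ := Finset.mem_image.1 hz
    obtain ⟨hqm, hqx⟩ := Finset.mem_filter.1 hq
    obtain ⟨⟨hBqm, hBqpt⟩, huniq⟩ := G.M_fiber hx hBQ hBx ha hc haB hcB hac hqm hqx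
    have hfeq : Q2.filter (fun q' => φ q' = φ q) = {q, B \ q} := by
      ext q'
      simp only [hQ2, Finset.mem_filter, Finset.mem_insert, Finset.mem_singleton]
      constructor
      · rintro ⟨⟨h1, h2⟩, h3⟩
        exact huniq q' h1 h2 h3
      · rintro (rfl | rfl)
        · exact ⟨⟨hqm, hqx⟩, rfl⟩
        · refine ⟨⟨hBqm, ?_⟩, ?_⟩
          · rw [hBqpt]; exact hqx
          · simp only [hφ, hBqpt]
    rw [hfeq]
    have hqne : q ≠ B \ q := by
      obtain ⟨hqB, hq2⟩ := Finset.mem_powersetCard.1 hqm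
      obtain ⟨w, hw⟩ : q.Nonempty := by rw [← Finset.card_pos, hq2]; norm_num
      intro h
      have : w ∈ B \ q := h ▸ hw
      exact (Finset.mem_sdiff.1 this).2 hw
    exact Finset.card_pair hqne
  rw [Finset.sum_congr rfl hfib, Finset.sum_const, smul_eq_mul] at hsum
  omega

end Good

namespace Good
variable {n : ℕ} {Q : Set (Finset (Fin n))} {blk : Finset (Fin n) → Finset (Fin n)}
  {pt : Finset (Fin n) → Fin n} (G : Good Q blk pt)
include G

/-- if `x` has no blocks, any neighbor has at most one block. -/
lemma only_block {x : Finset (Fin n)} {a b : Fin n} (hx : x.card = 6)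
    (h0 : Kf Q x = ∅) (ha : a ∈ x) (hb : b ∉ x) {D D' : Finset (Fin n)}
    (hD : D ∈ Kf Q (insert b (x.erase a))) (hD' : D' ∈ Kf Q (insert b (x.erase a))) :
    D = D' := by
  by_contra hne
  obtain ⟨hz6, _, _, _, _, _⟩ := nbr_facts hx ha hb
  have h3 := G.two_blocks_card3 hz6 hD hD' hne
  obtain ⟨B', hB', hbB'⟩ := G.exists_avoid hz6 h3 (Finset.mem_insert_self b _)
  rcases G.nbr_block hx ha hb hB' with ⟨_, hsub⟩ | ⟨h, _⟩
  · have : B' ∈ Kf Q x :=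
      mem_Kf.2 ⟨hsub.trans (Finset.erase_subset _ _), (mem_Kf.1 hB').2⟩
    rw [h0] at this
    exact absurd this (Finset.notMem_empty _)
  · exact hbB' h

lemma pt_not_mem {x t : Finset (Fin n)} (h0 : Kf Q x = ∅) (htx : t ⊆ x)
    (ht3 : t.card = 3) : pt t ∉ x := by
  intro h
  have : blk t ∈ Kf Q x := by
    refine mem_Kf.2 ⟨?_, G.blk_mem t ht3⟩
    rw [G.blk_eq t ht3]
    exact Finset.insert_subset h htx
  rw [h0] at this
  exact absurd this (Finset.notMem_empty _)

open Classical in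
lemma part2 {x : Finset (Fin n)} (hx : x.card = 6) (h0 : Kf Q x = ∅) :
    (Finset.univ.filter (fun z : Finset (Fin n) => z.card = 6 ∧
      (Kf Q z).card = 1 ∧ (x ∩ z).card = 5)).card = 60 := by
  classical
  set I : Finset ((_ : Finset (Fin n)) × Fin n) :=
    (Finset.powersetCard 3 x).sigma (fun t => x \ t) with hI
  set φ : ((_ : Finset (Fin n)) × Fin n) → Finset (Fin n) :=
    fun p => insert (pt p.1) (x.erase p.2) with hφ
  have hmemI : ∀ p ∈ I, p.1 ⊆ x ∧ p.1.card = 3 ∧ p.2 ∈ x ∧ p.2 ∉ p.1 := by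
    intro p hp
    obtain ⟨h1, h2⟩ := Finset.mem_sigma.1 hp
    obtain ⟨h3, h4⟩ := Finset.mem_powersetCard.1 h1
    have h5 := Finset.mem_sdiff.1 h2
    exact ⟨h3, h4, h5.1, h5.2⟩
  -- basic facts for elements of I
  have hface : ∀ p ∈ I, pt p.1 ∉ x ∧ blk p.1 ∈ Kf Q (φ p) ∧ (φ p).card = 6 ∧
      (x ∩ φ p).card = 5 ∧ x \ φ p = {p.2} ∧ φ p \ x = {pt p.1} := by
    intro p hp
    obtain ⟨htx, ht3, hax, hat⟩ := hmemI p hp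
    have hptx := G.pt_not_mem h0 htx ht3
    obtain ⟨hz6, _, hi5, hxz, hzx, _⟩ := nbr_facts hx hax hptx
    refine ⟨hptx, ?_, hz6, hi5, hxz, hzx⟩
    refine mem_Kf.2 ⟨?_, G.blk_mem _ ht3⟩
    rw [G.blk_eq _ ht3]
    refine Finset.insert_subset_insert _ ?_
    exact (Finset.subset_erase).2 ⟨htx, hat⟩
  have himg : Finset.univ.filter (fun z : Finset (Fin n) => z.card = 6 ∧
      (Kf Q z).card = 1 ∧ (x ∩ z).card = 5) = I.image φ := by
    ext z
    simp only [Finset.mem_filter, Finset.mem_univ, true_and, Finset.mem_image]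
    constructor
    · rintro ⟨h1, h2, h3⟩
      obtain ⟨a, b, ha, hb, haz, hbz, hze⟩ := nbr_param hx h1 h3
      obtain ⟨D, hDe⟩ := Finset.card_eq_one.1 h2
      have hD : D ∈ Kf Q z := hDe ▸ Finset.mem_singleton_self D
      rcases G.nbr_block hx ha hb (hze ▸ hD) with ⟨_, hsub⟩ | ⟨hbD, hte, ht3, hblk, hpt⟩
      · exfalso
        have : D ∈ Kf Q x :=
          mem_Kf.2 ⟨hsub.trans (Finset.erase_subset _ _), (mem_Kf.1 hD).2⟩
        rw [h0] at this
        exact absurd this (Finset.notMem_empty _)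
      · refine ⟨⟨D.erase b, a⟩, ?_, ?_⟩
        · refine Finset.mem_sigma.2 ⟨Finset.mem_powersetCard.2
            ⟨hte.trans (Finset.erase_subset _ _), ht3⟩, ?_⟩
          refine Finset.mem_sdiff.2 ⟨ha, fun h => ?_⟩
          exact (Finset.mem_erase.1 (hte h)).1 rfl
        · simp only [hφ, hpt, ← hze]
    · rintro ⟨p, hp, rfl⟩
      obtain ⟨hptx, hblk, hz6, hi5, _, _⟩ := hface p hp
      obtain ⟨htx, ht3, hax, hat⟩ := hmemI p hp
      refine ⟨hz6, ?_, hi5⟩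
      rw [Finset.card_eq_one]
      refine ⟨blk p.1, ?_⟩
      ext D
      simp only [Finset.mem_singleton]
      constructor
      · intro hD
        exact G.only_block hx h0 hax hptx hD hblk
      · rintro rfl
        exact hblk
  rw [himg]
  rw [Finset.card_image_of_injOn]
  · rw [hI, Finset.card_sigma]
    have : ∀ t ∈ Finset.powersetCard 3 x, (x \ t).card = 3 := by
      intro t ht
      obtain ⟨h1, h2⟩ := Finset.mem_powersetCard.1 ht
      rw [Finset.card_sdiff_of_subset h1, hx, h2]
    rw [Finset.sum_congr rfl this, Finset.sum_const, smul_eq_mul,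
      Finset.card_powersetCard, hx]
    decide
  · intro p hp p' hp' heq
    obtain ⟨hptx, hblk, _, _, hxz, hzx⟩ := hface p hp
    obtain ⟨hptx', hblk', _, _, hxz', hzx'⟩ := hface p' hp'
    obtain ⟨htx, ht3, hax, hat⟩ := hmemI p hp
    obtain ⟨htx', ht3', hax', hat'⟩ := hmemI p' hp'
    have ha : p.2 = p'.2 := by
      have := hxz.symm.trans (heq ▸ hxz')
      exact Finset.singleton_injective this
    have hb : pt p.1 = pt p'.1 := by
      have := hzx.symm.trans (heq ▸ hzx')
      exact Finset.singleton_injective this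
    have hblk'' : blk p'.1 ∈ Kf Q (φ p) := by rw [heq]; exact hblk'
    simp only [hφ] at hblk hblk''
    have hDeq : blk p.1 = blk p'.1 :=
      G.only_block hx h0 hax hptx hblk hblk''
    have ht : p.1 = p'.1 := by
      have e1 : (blk p.1).erase (pt p.1) = p.1 := by
        rw [G.blk_eq _ ht3]
        exact Finset.erase_insert (G.pt_not _ ht3)
      have e2 : (blk p'.1).erase (pt p'.1) = p'.1 := by
        rw [G.blk_eq _ ht3']
        exact Finset.erase_insert (G.pt_not _ ht3')
      rw [← e1, ← e2, hDeq, hb]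
    exact Sigma.ext ht (heq_of_eq ha)
end Good

namespace Good
variable {n : ℕ} {Q : Set (Finset (Fin n))} {blk : Finset (Fin n) → Finset (Fin n)}
  {pt : Finset (Fin n) → Fin n} (G : Good Q blk pt)
include G

open Classical in
lemma part3a {x B0 : Finset (Fin n)} (hn : 16 ≤ n) (hx : x.card = 6)
    (h1 : Kf Q x = {B0}) :
    (Finset.univ.filter (fun z : Finset (Fin n) => z.card = 6 ∧
      (Kf Q z).card = 0 ∧ (x ∩ z).card = 5)).card = 4 * (n - 15) := by
  classical
  have hB0 : B0 ∈ Kf Q x := h1 ▸ Finset.mem_singleton_self B0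
  obtain ⟨hB0x, hB0Q⟩ := mem_Kf.1 hB0
  have hB04 := G.card4 B0 hB0Q
  set Pim : Fin n → Finset (Fin n) := fun a =>
    ((Finset.powersetCard 3 (x.erase a)).filter (fun t => pt t ∉ x)).image pt
    with hPim
  set S : Finset ((_ : Fin n) × Fin n) := B0.sigma (fun a => xᶜ \ Pim a) with hS
  set φ : ((_ : Fin n) × Fin n) → Finset (Fin n) :=
    fun p => insert p.2 (x.erase p.1) with hφ
  have hmemS : ∀ p ∈ S, p.1 ∈ B0 ∧ p.1 ∈ x ∧ p.2 ∉ x ∧ p.2 ∉ Pim p.1 := by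
    intro p hp
    obtain ⟨hp1, hp2⟩ := Finset.mem_sigma.1 hp
    have := Finset.mem_sdiff.1 hp2
    exact ⟨hp1, hB0x hp1, by simpa using this.1, this.2⟩
  have himg : Finset.univ.filter (fun z : Finset (Fin n) => z.card = 6 ∧
      (Kf Q z).card = 0 ∧ (x ∩ z).card = 5) = S.image φ := by
    ext z
    simp only [Finset.mem_filter, Finset.mem_univ, true_and, Finset.mem_image]
    constructor
    · rintro ⟨h6, hk0, h5⟩
      rw [Finset.card_eq_zero] at hk0
      obtain ⟨a, b, ha, hb, haz, hbz, hze⟩ := nbr_param hx h6 h5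
      have haB0 : a ∈ B0 := by
        by_contra haB0
        have : B0 ∈ Kf Q z := by
          refine mem_Kf.2 ⟨?_, hB0Q⟩
          rw [hze]
          exact ((Finset.subset_erase).2 ⟨hB0x, haB0⟩).trans (Finset.subset_insert _ _)
        rw [hk0] at this
        exact absurd this (Finset.notMem_empty _)
      refine ⟨⟨a, b⟩, Finset.mem_sigma.2 ⟨haB0, Finset.mem_sdiff.2
        ⟨by simpa using hb, ?_⟩⟩, hze.symm⟩
      intro hbP
      obtain ⟨t, ht, hpt⟩ := Finset.mem_image.1 hbP
      obtain ⟨ht1, ht2⟩ := Finset.mem_filter.1 ht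
      obtain ⟨ht3, ht4⟩ := Finset.mem_powersetCard.1 ht1
      have : blk t ∈ Kf Q z := by
        refine mem_Kf.2 ⟨?_, G.blk_mem t ht4⟩
        rw [G.blk_eq t ht4, hpt, hze]
        exact Finset.insert_subset_insert b ht3
      rw [hk0] at this
      exact absurd this (Finset.notMem_empty _)
    · rintro ⟨p, hp, rfl⟩
      obtain ⟨haB0, hax, hbx, hbP⟩ := hmemS p hp
      obtain ⟨hz6, _, hi5, _, _, _⟩ := nbr_facts hx hax hbx
      refine ⟨hz6, ?_, hi5⟩
      rw [Finset.card_eq_zero]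
      rw [Finset.eq_empty_iff_forall_notMem]
      intro D hD
      rcases G.nbr_block hx hax hbx hD with ⟨_, hsub⟩ | ⟨hbD, hte, ht3, hblk, hpt⟩
      · have : D ∈ Kf Q x :=
          mem_Kf.2 ⟨hsub.trans (Finset.erase_subset _ _), (mem_Kf.1 hD).2⟩
        rw [h1, Finset.mem_singleton] at this
        subst this
        exact (Finset.mem_erase.1 (hsub haB0)).1 rfl
      · refine hbP (Finset.mem_image.2 ⟨D.erase p.2, ?_, hpt⟩)
        refine Finset.mem_filter.2 ⟨Finset.mem_powersetCard.2 ⟨hte, ht3⟩, ?_⟩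
        rw [hpt]; exact hbx
  rw [himg, Finset.card_image_of_injOn]
  · rw [hS, Finset.card_sigma]
    have hterm : ∀ a ∈ B0, (xᶜ \ Pim a).card = n - 15 := by
      intro a ha
      have hax : a ∈ x := hB0x ha
      have hPsub : Pim a ⊆ xᶜ := by
        intro w hw
        obtain ⟨t, ht, hpt⟩ := Finset.mem_image.1 hw
        obtain ⟨_, ht2⟩ := Finset.mem_filter.1 ht
        simpa using hpt ▸ ht2
      rw [Finset.card_sdiff_of_subset hPsub, Finset.card_compl, Fintype.card_fin, hx]
      have hPcard : (Pim a).card = 9 := by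
        rw [hPim]
        rw [Finset.card_image_of_injOn]
        · -- the filter has card 9
          have hneg : (Finset.powersetCard 3 (x.erase a)).filter
              (fun t => ¬ (pt t ∉ x)) = {B0.erase a} := by
            ext t
            simp only [Finset.mem_filter, Finset.mem_powersetCard,
              Finset.mem_singleton, not_not]
            constructor
            · rintro ⟨⟨ht1, ht2⟩, ht3⟩
              have hblk : blk t ∈ Kf Q x := by
                refine mem_Kf.2 ⟨?_, G.blk_mem t ht2⟩
                rw [G.blk_eq t ht2]
                exact Finset.insert_subset ht3
                  (ht1.trans (Finset.erase_subset _ _))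
              rw [h1, Finset.mem_singleton] at hblk
              apply Finset.eq_of_subset_of_card_le
              · intro w hw
                refine Finset.mem_erase.2 ⟨(Finset.mem_erase.1 (ht1 hw)).1, ?_⟩
                rw [← hblk]
                exact G.blk_sub t ht2 hw
              · rw [Finset.card_erase_of_mem ha, hB04, ht2]
            · rintro rfl
              have ht3 : (B0.erase a).card = 3 := by
                rw [Finset.card_erase_of_mem ha, hB04]
              have hblk : blk (B0.erase a) = B0 :=
                (G.blk_uniq _ ht3 B0 hB0Q (Finset.erase_subset _ _)).symm
              have hpt : pt (B0.erase a) = a := by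
                apply G.pt_eq ht3 (Finset.notMem_erase _ _)
                rw [hblk, Finset.insert_erase ha]
              refine ⟨⟨Finset.erase_subset_erase a hB0x, ht3⟩, ?_⟩
              rw [hpt]; exact hax
          have htot := Finset.card_filter_add_card_filter_not
            (s := Finset.powersetCard 3 (x.erase a)) (p := fun t => pt t ∉ x)
          rw [hneg] at htot
          have hpc : (Finset.powersetCard 3 (x.erase a)).card = 10 := by
            rw [Finset.card_powersetCard, Finset.card_erase_of_mem hax, hx]
            decide
          rw [hpc, Finset.card_singleton] at htot
          omega
        · -- pt injective on the filter
          intro t ht t' ht' heq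
          obtain ⟨ht1, ht2⟩ := Finset.mem_filter.1 ht
          obtain ⟨ht3, ht4⟩ := Finset.mem_powersetCard.1 ht1
          obtain ⟨ht1', ht2'⟩ := Finset.mem_filter.1 ht'
          obtain ⟨ht3', ht4'⟩ := Finset.mem_powersetCard.1 ht1'
          by_contra hne
          set b := pt t with hbdef
          have hbx : b ∉ x := ht2
          have hz6 : (insert b (x.erase a)).card = 6 := (nbr_facts hx hax hbx).1
          have hblkt : blk t ∈ Kf Q (insert b (x.erase a)) := by
            refine mem_Kf.2 ⟨?_, G.blk_mem t ht4⟩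
            rw [G.blk_eq t ht4]
            exact Finset.insert_subset_insert b ht3
          have hblkt' : blk t' ∈ Kf Q (insert b (x.erase a)) := by
            refine mem_Kf.2 ⟨?_, G.blk_mem t' ht4'⟩
            rw [G.blk_eq t' ht4', ← heq]
            exact Finset.insert_subset_insert b ht3'
          have hbt : b ∉ t := fun hh => hbx (Finset.mem_of_mem_erase (ht3 hh))
          have hbt' : b ∉ t' := fun hh => hbx (Finset.mem_of_mem_erase (ht3' hh))
          have hblkne : blk t ≠ blk t' := by
            intro h
            apply hne
            have e1 : (blk t).erase b = t := by
              rw [G.blk_eq t ht4]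
              exact Finset.erase_insert hbt
            have e2 : (blk t').erase b = t' := by
              rw [G.blk_eq t' ht4', ← heq]
              exact Finset.erase_insert hbt'
            rw [← e1, ← e2, h]
          have h3 := G.two_blocks_card3 hz6 hblkt hblkt' hblkne
          obtain ⟨B', hB', hbB'⟩ := G.exists_avoid hz6 h3 (Finset.mem_insert_self b _)
          rcases G.nbr_block hx hax hbx hB' with ⟨_, hsub⟩ | ⟨h, _⟩
          · have : B' ∈ Kf Q x :=
              mem_Kf.2 ⟨hsub.trans (Finset.erase_subset _ _), (mem_Kf.1 hB').2⟩
            rw [h1, Finset.mem_singleton] at this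
            subst this
            exact (Finset.mem_erase.1 (hsub ha)).1 rfl
          · exact hbB' h
      omega
    rw [Finset.sum_congr rfl hterm, Finset.sum_const, smul_eq_mul, hB04]
  · intro p hp p' hp' heq
    obtain ⟨_, hax, hbx, _⟩ := hmemS p hp
    obtain ⟨_, hax', hbx', _⟩ := hmemS p' hp'
    obtain ⟨_, _, _, hxz, hzx, _⟩ := nbr_facts hx hax hbx
    obtain ⟨_, _, _, hxz', hzx', _⟩ := nbr_facts hx hax' hbx'
    simp only [hφ] at heq
    have ha : p.1 = p'.1 := by
      have := hxz.symm.trans (heq ▸ hxz')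
      exact Finset.singleton_injective this
    have hb : p.2 = p'.2 := by
      have := hzx.symm.trans (heq ▸ hzx')
      exact Finset.singleton_injective this
    exact Sigma.ext ha (heq_of_eq hb)
end Good

namespace Good
variable {n : ℕ} {Q : Set (Finset (Fin n))} {blk : Finset (Fin n) → Finset (Fin n)}
  {pt : Finset (Fin n) → Fin n} (G : Good Q blk pt)
include G

/-- direction of a 3-block neighbor: the removed point avoids some block of `x`. -/
lemma dir_avoid {x z : Finset (Fin n)} {a b : Fin n} (hx : x.card = 6)
    (ha : a ∈ x) (hb : b ∉ x) (hz : z = insert b (x.erase a))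
    (h6 : z.card = 6) (h3 : (Kf Q z).card = 3) :
    ∃ D ∈ Kf Q x, a ∉ D := by
  have hbz : b ∈ z := hz ▸ Finset.mem_insert_self b _
  obtain ⟨D, hD, hbD⟩ := G.exists_avoid h6 h3 hbz
  rcases G.nbr_block hx ha hb (hz ▸ hD) with ⟨_, hsub⟩ | ⟨h, _⟩
  · refine ⟨D, mem_Kf.2 ⟨hsub.trans (Finset.erase_subset _ _), (mem_Kf.1 hD).2⟩,
      fun h => (Finset.mem_erase.1 (hsub h)).1 rfl⟩
  · exact absurd h hbD

open Classical in
lemma part3b {x B0 : Finset (Fin n)} (hx : x.card = 6) (h1 : Kf Q x = {B0}) :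
    (Finset.univ.filter (fun z : Finset (Fin n) => z.card = 6 ∧
      (Kf Q z).card = 3 ∧ (x ∩ z).card = 5)).card = 6 := by
  classical
  have hB0 : B0 ∈ Kf Q x := h1 ▸ Finset.mem_singleton_self B0
  obtain ⟨hB0x, hB0Q⟩ := mem_Kf.1 hB0
  have hB04 := G.card4 B0 hB0Q
  have hcd2 : (x \ B0).card = 2 := by rw [Finset.card_sdiff_of_subset hB0x, hx, hB04]
  obtain ⟨a1, a2, hne12, hxB0⟩ := Finset.card_eq_two.1 hcd2
  have hmem1 : a1 ∈ x \ B0 := hxB0 ▸ Finset.mem_insert_self _ _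
  have hmem2 : a2 ∈ x \ B0 := hxB0 ▸ Finset.mem_insert.2
    (Or.inr (Finset.mem_singleton_self _))
  obtain ⟨ha1x, ha1B⟩ := Finset.mem_sdiff.1 hmem1
  obtain ⟨ha2x, ha2B⟩ := Finset.mem_sdiff.1 hmem2
  set Za : Fin n → Finset (Finset (Fin n)) := fun a =>
    Finset.univ.filter (fun z : Finset (Fin n) => z.card = 6 ∧
      (Kf Q z).card = 3 ∧ (x ∩ z).card = 5 ∧ x \ z = {a}) with hZa
  have hsplit : Finset.univ.filter (fun z : Finset (Fin n) => z.card = 6 ∧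
      (Kf Q z).card = 3 ∧ (x ∩ z).card = 5) = Za a1 ∪ Za a2 := by
    ext z
    simp only [hZa, Finset.mem_filter, Finset.mem_univ, true_and, Finset.mem_union]
    constructor
    · rintro ⟨h6, h3, h5⟩
      obtain ⟨a, b, ha, hb, haz, hbz, hze⟩ := nbr_param hx h6 h5
      obtain ⟨_, _, _, hxz, _, _⟩ := nbr_facts hx ha hb
      rw [← hze] at hxz
      obtain ⟨D, hD, haD⟩ := G.dir_avoid hx ha hb hze h6 h3
      rw [h1, Finset.mem_singleton] at hD
      subst hD
      have : a ∈ x \ D := Finset.mem_sdiff.2 ⟨ha, haD⟩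
      rw [hxB0] at this
      rcases Finset.mem_insert.1 this with h | h
      · exact Or.inl ⟨h6, h3, h5, h ▸ hxz⟩
      · rw [Finset.mem_singleton] at h
        exact Or.inr ⟨h6, h3, h5, h ▸ hxz⟩
    · rintro (⟨h6, h3, h5, _⟩ | ⟨h6, h3, h5, _⟩) <;> exact ⟨h6, h3, h5⟩
  rw [hsplit, Finset.card_union_of_disjoint]
  · have hQ2 : ∀ (c : Fin n), c ∈ x → c ∉ B0 →
        (Finset.powersetCard 2 B0).filter (fun q => pt (insert c q) ∉ x) =
        Finset.powersetCard 2 B0 := by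
      intro c hcx hcB
      apply Finset.filter_true_of_mem
      intro q hq
      obtain ⟨hqB, hq2⟩ := Finset.mem_powersetCard.1 hq
      have hcq : c ∉ q := fun h => hcB (hqB h)
      have ht3 : (insert c q).card = 3 := by
        rw [Finset.card_insert_of_notMem hcq, hq2]
      intro hptx
      have : blk (insert c q) ∈ Kf Q x := by
        refine mem_Kf.2 ⟨?_, G.blk_mem _ ht3⟩
        rw [G.blk_eq _ ht3]
        exact Finset.insert_subset hptx (Finset.insert_subset hcx
          (hqB.trans hB0x))
      rw [h1, Finset.mem_singleton] at this
      exact hcB (this ▸ G.blk_sub _ ht3 (Finset.mem_insert_self _ _))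
    have hpc : (Finset.powersetCard 2 B0).card = 6 := by
      rw [Finset.card_powersetCard, hB04]
      decide
    have hc1 := G.lemmaM hx hB0Q hB0x ha1x ha2x ha1B ha2B hne12
    have hc2 := G.lemmaM hx hB0Q hB0x ha2x ha1x ha2B ha1B (Ne.symm hne12)
    rw [hQ2 a2 ha2x ha2B, hpc] at hc1
    rw [hQ2 a1 ha1x ha1B, hpc] at hc2
    simp only [hZa]
    omega
  · rw [Finset.disjoint_left]
    intro z hz1 hz2
    simp only [hZa, Finset.mem_filter] at hz1 hz2
    have := hz1.2.2.2.2.symm.trans hz2.2.2.2.2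
    exact hne12 (Finset.singleton_injective this)
end Good

namespace Good
variable {n : ℕ} {Q : Set (Finset (Fin n))} {blk : Finset (Fin n) → Finset (Fin n)}
  {pt : Finset (Fin n) → Fin n} (G : Good Q blk pt)
include G

open Classical in
lemma part4three {x : Finset (Fin n)} (hx : x.card = 6) (h3x : (Kf Q x).card = 3) :
    (Finset.univ.filter (fun z : Finset (Fin n) => z.card = 6 ∧
      (Kf Q z).card = 3 ∧ (x ∩ z).card = 5)).card = 12 := by
  classical
  set Za : Fin n → Finset (Finset (Fin n)) := fun a =>
    Finset.univ.filter (fun z : Finset (Fin n) => z.card = 6 ∧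
      (Kf Q z).card = 3 ∧ (x ∩ z).card = 5 ∧ x \ z = {a}) with hZa
  have hsplit : Finset.univ.filter (fun z : Finset (Fin n) => z.card = 6 ∧
      (Kf Q z).card = 3 ∧ (x ∩ z).card = 5) = x.biUnion Za := by
    ext z
    simp only [hZa, Finset.mem_filter, Finset.mem_univ, true_and, Finset.mem_biUnion]
    constructor
    · rintro ⟨h6, h3, h5⟩
      obtain ⟨a, b, ha, hb, haz, hbz, hze⟩ := nbr_param hx h6 h5
      obtain ⟨_, _, _, hxz, _, _⟩ := nbr_facts hx ha hb
      rw [← hze] at hxz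
      exact ⟨a, ha, h6, h3, h5, hxz⟩
    · rintro ⟨a, _, h6, h3, h5, _⟩
      exact ⟨h6, h3, h5⟩
  rw [hsplit, Finset.card_biUnion]
  · have hterm : ∀ a ∈ x, (Za a).card = 2 := by
      intro a ha
      obtain ⟨B, hB, haB⟩ := G.exists_avoid hx h3x ha
      obtain ⟨hBx, hBQ⟩ := mem_Kf.1 hB
      have hB4 := G.card4 B hBQ
      have hcd2 : (x \ B).card = 2 := by rw [Finset.card_sdiff_of_subset hBx, hx, hB4]
      have haxB : a ∈ x \ B := Finset.mem_sdiff.2 ⟨ha, haB⟩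
      obtain ⟨w1, w2, hw12, hxBe⟩ := Finset.card_eq_two.1 hcd2
      -- get the other element c
      obtain ⟨c, hac, hcxB⟩ : ∃ c, a ≠ c ∧ c ∈ x \ B := by
        rw [hxBe] at haxB
        rcases Finset.mem_insert.1 haxB with h | h
        · exact ⟨w2, h ▸ hw12, hxBe ▸ Finset.mem_insert.2
            (Or.inr (Finset.mem_singleton_self _))⟩
        · rw [Finset.mem_singleton] at h
          exact ⟨w1, h ▸ fun hh => hw12 hh.symm, hxBe ▸ Finset.mem_insert_self _ _⟩
      obtain ⟨hcx, hcB⟩ := Finset.mem_sdiff.1 hcxB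
      have hM := G.lemmaM hx hBQ hBx ha hcx haB hcB hac
      -- the bad pairs : exactly 2
      have hbad : ((Finset.powersetCard 2 B).filter
          (fun q => ¬ pt (insert c q) ∉ x)) =
          ((Kf Q x).erase B).image (fun B' => B ∩ B') := by
        ext q
        simp only [Finset.mem_filter, Finset.mem_powersetCard, not_not,
          Finset.mem_image, Finset.mem_erase]
        constructor
        · rintro ⟨⟨hqB, hq2⟩, hptx⟩
          have hcq : c ∉ q := fun h => hcB (hqB h)
          have ht3 : (insert c q).card = 3 := by
            rw [Finset.card_insert_of_notMem hcq, hq2]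
          have hD : blk (insert c q) ∈ Kf Q x := by
            refine mem_Kf.2 ⟨?_, G.blk_mem _ ht3⟩
            rw [G.blk_eq _ ht3]
            exact Finset.insert_subset hptx (Finset.insert_subset hcx
              (hqB.trans hBx))
          have hDB : blk (insert c q) ≠ B :=
            fun h => hcB (h ▸ G.blk_sub _ ht3 (Finset.mem_insert_self _ _))
          refine ⟨blk (insert c q), ⟨hDB, hD⟩, ?_⟩
          symm
          apply Finset.eq_of_subset_of_card_le
          · intro w hw
            exact Finset.mem_inter.2 ⟨hqB hw, G.blk_sub _ ht3
              (Finset.mem_insert.2 (Or.inr hw))⟩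
          · have := G.inter2 hx hB hD (Ne.symm hDB)
            omega
        · rintro ⟨B', ⟨hB'B, hB'⟩, rfl⟩
          have hB'Q := (mem_Kf.1 hB').2
          have hi2 : (B ∩ B').card = 2 := G.inter2 hx hB hB' (Ne.symm hB'B)
          have hcB' : c ∈ B' := by
            by_contra hcB'
            have hd := G.pair_disjoint hx hB hB' (Ne.symm hB'B)
            exact (Finset.disjoint_left.1 hd) hcxB (Finset.mem_sdiff.2
              ⟨hcx, hcB'⟩)
          have hsub : insert c (B ∩ B') ⊆ B' :=
            Finset.insert_subset hcB' Finset.inter_subset_right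
          have hcq : c ∉ B ∩ B' := fun h => hcB (Finset.mem_inter.1 h).1
          have ht3 : (insert c (B ∩ B')).card = 3 := by
            rw [Finset.card_insert_of_notMem hcq, hi2]
          have hblk : blk (insert c (B ∩ B')) = B' :=
            (G.blk_uniq _ ht3 B' hB'Q hsub).symm
          refine ⟨⟨Finset.inter_subset_left, hi2⟩, ?_⟩
          have : pt (insert c (B ∩ B')) ∈ blk (insert c (B ∩ B')) := by
            rw [G.blk_eq _ ht3]
            exact Finset.mem_insert_self _ _
          rw [hblk] at this
          exact (mem_Kf.1 hB').1 this
      have hbadcard : ((Finset.powersetCard 2 B).filter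
          (fun q => ¬ pt (insert c q) ∉ x)).card = 2 := by
        rw [hbad, Finset.card_image_of_injOn, Finset.card_erase_of_mem hB, h3x]
        intro B' hB' B'' hB'' heq
        simp only [Finset.coe_erase, Set.mem_diff, Finset.mem_coe,
          Set.mem_singleton_iff] at hB' hB''
        have hcB' : c ∈ B' := by
          by_contra hcB'
          have hd := G.pair_disjoint hx hB hB'.1 (fun h => hB'.2 h.symm)
          exact (Finset.disjoint_left.1 hd) (Finset.mem_sdiff.2 ⟨hcx, hcB⟩)
            (Finset.mem_sdiff.2 ⟨hcx, hcB'⟩)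
        have hcB'' : c ∈ B'' := by
          by_contra hcB''
          have hd := G.pair_disjoint hx hB hB''.1 (fun h => hB''.2 h.symm)
          exact (Finset.disjoint_left.1 hd) (Finset.mem_sdiff.2 ⟨hcx, hcB⟩)
            (Finset.mem_sdiff.2 ⟨hcx, hcB''⟩)
        have hi2 : (B ∩ B').card = 2 := G.inter2 hx hB hB'.1 (fun h => hB'.2 h.symm)
        have hcq : c ∉ B ∩ B' := fun h => hcB (Finset.mem_inter.1 h).1
        have ht3 : (insert c (B ∩ B')).card = 3 := by
          rw [Finset.card_insert_of_notMem hcq, hi2]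
        have heq' : B ∩ B' = B ∩ B'' := heq
        apply G.eq_of_three (mem_Kf.1 hB'.1).2 (mem_Kf.1 hB''.1).2 ht3
        · exact Finset.insert_subset hcB' Finset.inter_subset_right
        · rw [heq']
          exact Finset.insert_subset hcB'' Finset.inter_subset_right
      have htot := Finset.card_filter_add_card_filter_not
        (s := Finset.powersetCard 2 B) (p := fun q => pt (insert c q) ∉ x)
      rw [hbadcard] at htot
      have hpc : (Finset.powersetCard 2 B).card = 6 := by
        rw [Finset.card_powersetCard, hB4]
        decide
      simp only [hZa]
      omega
    rw [Finset.sum_congr rfl hterm, Finset.sum_const, smul_eq_mul, hx]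
  · intro a _ a' _ hne
    rw [Function.onFun, Finset.disjoint_left]
    intro z hz1 hz2
    simp only [hZa, Finset.mem_filter] at hz1 hz2
    exact hne (Finset.singleton_injective
      (hz1.2.2.2.2.symm.trans hz2.2.2.2.2))

open Classical in
lemma part4 {x : Finset (Fin n)} (hn : 16 ≤ n) (hx : x.card = 6)
    (h3x : (Kf Q x).card = 3) :
    (Finset.univ.filter (fun z : Finset (Fin n) => z.card = 6 ∧
      (Kf Q z).card = 1 ∧ (x ∩ z).card = 5)).card = 6 * (n - 8) := by
  classical
  set N := Finset.univ.filter (fun z : Finset (Fin n) => z.card = 6 ∧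
    (x ∩ z).card = 5) with hN
  set T3 := Finset.univ.filter (fun z : Finset (Fin n) => z.card = 6 ∧
    (Kf Q z).card = 3 ∧ (x ∩ z).card = 5) with hT3
  have hNcard : N.card = 6 * (n - 6) := by
    have himg : N = (x ×ˢ xᶜ).image (fun p => insert p.2 (x.erase p.1)) := by
      ext z
      simp only [hN, Finset.mem_filter, Finset.mem_univ, true_and,
        Finset.mem_image, Finset.mem_product, Finset.mem_compl]
      constructor
      · rintro ⟨h6, h5⟩
        obtain ⟨a, b, ha, hb, haz, hbz, hze⟩ := nbr_param hx h6 h5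
        exact ⟨⟨a, b⟩, ⟨ha, hb⟩, hze.symm⟩
      · rintro ⟨p, ⟨ha, hb⟩, rfl⟩
        obtain ⟨h6, _, h5, _, _, _⟩ := nbr_facts hx ha hb
        exact ⟨h6, h5⟩
    rw [himg, Finset.card_image_of_injOn]
    · rw [Finset.card_product, Finset.card_compl, Fintype.card_fin, hx]
    · intro p hp p' hp' heq
      simp only [Finset.mem_coe, Finset.mem_product, Finset.mem_compl] at hp hp'
      obtain ⟨_, _, _, hxz, hzx, _⟩ := nbr_facts hx hp.1 hp.2
      obtain ⟨_, _, _, hxz', hzx', _⟩ := nbr_facts hx hp'.1 hp'.2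
      have heq2 : insert p.2 (x.erase p.1) = insert p'.2 (x.erase p'.1) := heq
      rw [← heq2] at hxz' hzx'
      have ha : p.1 = p'.1 := Finset.singleton_injective (hxz.symm.trans hxz')
      have hb : p.2 = p'.2 := Finset.singleton_injective (hzx.symm.trans hzx')
      exact Prod.ext ha hb
  have hsub : T3 ⊆ N := by
    intro z hz
    simp only [hT3, Finset.mem_filter] at hz
    simp only [hN, Finset.mem_filter]
    exact ⟨hz.1, hz.2.1, hz.2.2.2⟩
  have hdiff : Finset.univ.filter (fun z : Finset (Fin n) => z.card = 6 ∧
      (Kf Q z).card = 1 ∧ (x ∩ z).card = 5) = N \ T3 := by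
    ext z
    simp only [hN, hT3, Finset.mem_filter, Finset.mem_univ, true_and,
      Finset.mem_sdiff]
    constructor
    · rintro ⟨h6, h1, h5⟩
      exact ⟨⟨h6, h5⟩, fun h => by omega⟩
    · rintro ⟨⟨h6, h5⟩, hnot⟩
      refine ⟨h6, ?_, h5⟩
      obtain ⟨a, b, ha, hb, haz, hbz, hze⟩ := nbr_param hx h6 h5
      obtain ⟨D, hD, haD⟩ := G.exists_avoid hx h3x ha
      have hDz : D ∈ Kf Q z := by
        refine mem_Kf.2 ⟨?_, (mem_Kf.1 hD).2⟩
        rw [hze]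
        exact ((Finset.subset_erase).2 ⟨(mem_Kf.1 hD).1, haD⟩).trans
          (Finset.subset_insert _ _)
      have hne0 : (Kf Q z).card ≠ 0 := by
        rw [Finset.card_ne_zero]
        exact ⟨D, hDz⟩
      have h013 := G.card013 h6
      have hne3 : (Kf Q z).card ≠ 3 := fun h => hnot ⟨h6, h, h5⟩
      omega
  have h12 : T3.card = 12 := by rw [hT3]; exact G.part4three hx h3x
  rw [hdiff, Finset.card_sdiff_of_subset hsub, hNcard, h12]
  omega

end Good



/-- Let `Q` be the Steiner quadruple system of weight-4 codewords of the
extended binary Hamming code of length `n ≥ 16` (a linear code of minimum distance 4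
whose weight-4 supports form a 3-(n,4,1) design). The code `C⁰` of 6-subsets containing
no block of `Q` is completely regular in the Johnson graph `J(n,6)` with covering
radius 2 and intersection array `{60, 6; 4(n−15), 6(n−8)}`: with `C¹` and `C²` the
6-subsets containing exactly 1 and exactly 3 blocks respectively, there are no edges
between `C⁰` and `C²`, each vertex of `C⁰` has 60 neighbors in `C¹`, each vertex of
`C¹` has `4(n−15)` neighbors in `C⁰` and 6 neighbors in `C²`, and each vertex of `C²`
has `6(n−8)` neighbors in `C¹`. -/
theorem stmt8 (n : ℕ) (hn : 16 ≤ n)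
    (H : Submodule (ZMod 2) (Fin n → ZMod 2))
    (hmin : ∀ c ∈ H, c ≠ 0 → 4 ≤ (Finset.univ.filter (fun i => c i ≠ 0)).card)
    (Q : Set (Finset (Fin n)))
    (hQ : ∀ B : Finset (Fin n),
      B ∈ Q ↔ B.card = 4 ∧ (fun i => if i ∈ B then (1 : ZMod 2) else 0) ∈ H)
    (hSQS : ∀ s : Finset (Fin n), s.card = 3 → ∃! B, B ∈ Q ∧ s ⊆ B) :
    (∀ x : Finset (Fin n), x.card = 6 → {B ∈ Q | B ⊆ x}.ncard = 0 →
      ∀ z : Finset (Fin n), z.card = 6 → {B ∈ Q | B ⊆ z}.ncard = 3 →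
        (x ∩ z).card ≠ 5) ∧
    (∀ x : Finset (Fin n), x.card = 6 → {B ∈ Q | B ⊆ x}.ncard = 0 →
      {z : Finset (Fin n) | z.card = 6 ∧ {B ∈ Q | B ⊆ z}.ncard = 1 ∧
        (x ∩ z).card = 5}.ncard = 60) ∧
    (∀ x : Finset (Fin n), x.card = 6 → {B ∈ Q | B ⊆ x}.ncard = 1 →
      {z : Finset (Fin n) | z.card = 6 ∧ {B ∈ Q | B ⊆ z}.ncard = 0 ∧
        (x ∩ z).card = 5}.ncard = 4 * (n - 15) ∧
      {z : Finset (Fin n) | z.card = 6 ∧ {B ∈ Q | B ⊆ z}.ncard = 3 ∧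
        (x ∩ z).card = 5}.ncard = 6) ∧
    (∀ x : Finset (Fin n), x.card = 6 → {B ∈ Q | B ⊆ x}.ncard = 3 →
      {z : Finset (Fin n) | z.card = 6 ∧ {B ∈ Q | B ⊆ z}.ncard = 1 ∧
        (x ∩ z).card = 5}.ncard = 6 * (n - 8)) := by
  classical
  -- block size
  have hQ4 : ∀ B ∈ Q, B.card = 4 := fun B hB => ((hQ B).1 hB).1
  -- symmetric difference of two blocks meeting in 2 points is a block
  have hdiff : ∀ B ∈ Q, ∀ B' ∈ Q, B ≠ B' → (B ∩ B').card = 2 →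
      (B ∪ B') \ (B ∩ B') ∈ Q := by
    intro B hB B' hB' hne h2
    rw [hQ] at hB hB' ⊢
    constructor
    · have h1 := Finset.card_union_add_card_inter B B'
      have h3 := Finset.card_sdiff_of_subset (Finset.inter_subset_union (s := B) (t := B'))
      omega
    · have heq : (fun i => if i ∈ (B ∪ B') \ (B ∩ B') then (1 : ZMod 2) else 0) =
          (fun i => if i ∈ B then (1 : ZMod 2) else 0) +
          (fun i => if i ∈ B' then (1 : ZMod 2) else 0) := by
        funext i
        simp only [Pi.add_apply, Finset.mem_sdiff, Finset.mem_union,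
          Finset.mem_inter]
        by_cases h1 : i ∈ B <;> by_cases h2' : i ∈ B' <;>
          simp [h1, h2'] <;> decide
      rw [heq]
      exact H.add_mem hB.2 hB'.2
  -- the block through a triple
  have hex : ∀ s : Finset (Fin n), ∃ B,
      s.card = 3 → (B ∈ Q ∧ s ⊆ B) ∧ ∀ B' ∈ Q, s ⊆ B' → B' = B := by
    intro s
    by_cases hs : s.card = 3
    · obtain ⟨B, hB, hu⟩ := hSQS s hs
      exact ⟨B, fun _ => ⟨hB, fun B' h1 h2 => hu B' ⟨h1, h2⟩⟩⟩
    · exact ⟨∅, fun h => absurd h hs⟩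
  choose blk hblk using hex
  -- the fourth point of the block through a triple
  have hex2 : ∀ t : Finset (Fin n), ∃ b,
      t.card = 3 → b ∉ t ∧ blk t = insert b t := by
    intro t
    by_cases ht : t.card = 3
    · have h4 : (blk t).card = 4 := hQ4 _ ((hblk t ht).1.1)
      have hsub := (hblk t ht).1.2
      have hone : (blk t \ t).card = 1 := by
        rw [Finset.card_sdiff_of_subset hsub, h4, ht]
      obtain ⟨b, hb⟩ := Finset.card_eq_one.1 hone
      have hbm : b ∈ blk t \ t := hb ▸ Finset.mem_singleton_self b
      rw [Finset.mem_sdiff] at hbm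
      refine ⟨b, fun _ => ⟨hbm.2, ?_⟩⟩
      symm
      apply Finset.eq_of_subset_of_card_le (Finset.insert_subset hbm.1 hsub)
      rw [Finset.card_insert_of_notMem hbm.2, h4, ht]
    · exact ⟨⟨0, by omega⟩, fun h => absurd h ht⟩
  choose pt hpt using hex2
  have G : Good Q blk pt :=
    ⟨hQ4, fun s hs => (hblk s hs).1.1, fun s hs => (hblk s hs).1.2,
     fun s hs B hB hsB => (hblk s hs).2 B hB hsB,
     fun s hs => (hpt s hs).1, fun s hs => (hpt s hs).2, hdiff⟩
  -- conversion between ncard and Kf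
  have hKn : ∀ z : Finset (Fin n), {B ∈ Q | B ⊆ z}.ncard = (Kf Q z).card := by
    intro z
    rw [← Set.ncard_coe_finset]
    congr 1
    ext B
    simp only [Set.mem_setOf_eq, Finset.coe_filter, Kf, Finset.mem_powerset,
      Finset.mem_coe, Finset.mem_filter]
    tauto
  have hset : ∀ (x : Finset (Fin n)) (k : ℕ),
      {z : Finset (Fin n) | z.card = 6 ∧ {B ∈ Q | B ⊆ z}.ncard = k ∧
        (x ∩ z).card = 5} =
      ↑(Finset.univ.filter (fun z : Finset (Fin n) => z.card = 6 ∧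
        (Kf Q z).card = k ∧ (x ∩ z).card = 5)) := by
    intro x k
    ext z
    simp [hKn]
  refine ⟨?_, ?_, ?_, ?_⟩
  · intro x hx h0 z hz h3
    rw [hKn] at h0 h3
    exact G.part1 hx (Finset.card_eq_zero.1 h0) hz h3
  · intro x hx h0
    rw [hKn] at h0
    rw [hset x 1, Set.ncard_coe_finset]
    exact G.part2 hx (Finset.card_eq_zero.1 h0)
  · intro x hx h1
    rw [hKn] at h1
    obtain ⟨B0, hB0⟩ := Finset.card_eq_one.1 h1
    constructor
    · rw [hset x 0, Set.ncard_coe_finset]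
      exact G.part3a hn hx hB0
    · rw [hset x 3, Set.ncard_coe_finset]
      exact G.part3b hx hB0
  · intro x hx h3
    rw [hKn] at h3
    rw [hset x 1, Set.ncard_coe_finset]
    exact G.part4 hn hx h3
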